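/- arXiv:2507.13140 — 2 statements merged into one kernel-verified Lean document; each statement's English description precedes it below -/
import Mathlib

section
/- Let W ∈ ℝ^{m×n} be a real matrix and let |W| be its entrywise absolute value matrix. Then the infimum of ‖|W| - B‖_F over matrices B ∈ ℝ^{m×n} of rank at most 1 is at most the infimum of ‖W - B‖_F over matrices B ∈ ℝ^{m×n} of rank at most 1. -/
open Matrix Module

lemma rank_of_outer {m n : ℕ} (u : Fin m → ℝ) (v : Fin n → ℝ) :
    (Matrix.of fun i j => u i * v j : Matrix (Fin m) (Fin n) ℝ).rank ≤ 1 := by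
  rw [Matrix.rank_eq_finrank_span_cols]
  have hle : Submodule.span ℝ (Set.range (Matrix.of fun i j => u i * v j : Matrix (Fin m) (Fin n) ℝ)ᵀ)
      ≤ Submodule.span ℝ {u} := by
    rw [Submodule.span_le]
    rintro _ ⟨j, rfl⟩
    refine Submodule.mem_span_singleton.2 ⟨v j, ?_⟩
    funext i
    simp [mul_comm]
  calc finrank ℝ (Submodule.span ℝ (Set.range (Matrix.of fun i j => u i * v j : Matrix (Fin m) (Fin n) ℝ)ᵀ))
      ≤ finrank ℝ (Submodule.span ℝ {u}) := Submodule.finrank_mono hle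
    _ ≤ 1 := by
        simpa using finrank_span_le_card (R := ℝ) ({u} : Set (Fin m → ℝ))

lemma rank_one_decomp {m n : ℕ} (B : Matrix (Fin m) (Fin n) ℝ) (h : B.rank ≤ 1) :
    ∃ (u : Fin m → ℝ) (v : Fin n → ℝ), ∀ i j, B i j = u i * v j := by
  have h1 : finrank ℝ (Submodule.span ℝ (Set.range Bᵀ)) ≤ 1 := by
    rw [Matrix.rank_eq_finrank_span_cols] at h; exact h
  obtain ⟨u, hu⟩ := (Submodule.finrank_le_one_iff_isPrincipal _).1 h1
  choose c hc using fun j => Submodule.mem_span_singleton.1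
    (hu ▸ Submodule.subset_span (Set.mem_range_self j) : Bᵀ j ∈ Submodule.span ℝ {u})
  refine ⟨u, c, fun i j => ?_⟩
  have := congrFun (hc j) i
  simp only [Pi.smul_apply, smul_eq_mul, Matrix.transpose_apply] at this
  rw [← this, mul_comm]

/-- The entrywise absolute value matrix of `W`. -/
noncomputable def absM {m n : ℕ} (W : Matrix (Fin m) (Fin n) ℝ) :
    Matrix (Fin m) (Fin n) ℝ :=
  Matrix.of fun i j => |W i j|

/-- The Frobenius norm `‖M‖_F = (Σ_{i,j} M_{ij}²)^{1/2}`. -/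
noncomputable def frobNorm {m n : ℕ} (M : Matrix (Fin m) (Fin n) ℝ) : ℝ :=
  Real.sqrt (∑ i, ∑ j, (M i j) ^ 2)

lemma frobNorm_nonneg {m n : ℕ} (M : Matrix (Fin m) (Fin n) ℝ) : 0 ≤ frobNorm M :=
  Real.sqrt_nonneg _

/-- The best rank ≤ 1 Frobenius approximation error of `|W|` is at most that of `W`. -/
theorem sInf_rank_one_error_absM_le {m n : ℕ} (W : Matrix (Fin m) (Fin n) ℝ) :
    sInf {x : ℝ | ∃ B : Matrix (Fin m) (Fin n) ℝ, B.rank ≤ 1 ∧ x = frobNorm (absM W - B)} ≤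
    sInf {x : ℝ | ∃ B : Matrix (Fin m) (Fin n) ℝ, B.rank ≤ 1 ∧ x = frobNorm (W - B)} := by
  set S := {x : ℝ | ∃ B : Matrix (Fin m) (Fin n) ℝ, B.rank ≤ 1 ∧ x = frobNorm (absM W - B)}
  have hbdd : BddBelow S := ⟨0, fun x hx => by obtain ⟨B, _, rfl⟩ := hx; exact frobNorm_nonneg _⟩
  have hne : {x : ℝ | ∃ B : Matrix (Fin m) (Fin n) ℝ, B.rank ≤ 1 ∧ x = frobNorm (W - B)}.Nonempty := by
    refine ⟨frobNorm (W - 0), 0, ?_, rfl⟩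
    simp [Matrix.rank_zero]
  refine le_csInf hne ?_
  rintro x ⟨B, hB, rfl⟩
  obtain ⟨u, v, huv⟩ := rank_one_decomp B hB
  set C : Matrix (Fin m) (Fin n) ℝ := Matrix.of fun i j => |u i| * |v j|
  have hC : C.rank ≤ 1 := rank_of_outer _ _
  have hle : frobNorm (absM W - C) ≤ frobNorm (W - B) := by
    apply Real.sqrt_le_sqrt
    apply Finset.sum_le_sum
    intro i _
    apply Finset.sum_le_sum
    intro j _
    have h1 : |(absM W - C) i j| ≤ |(W - B) i j| := by
      simp only [Matrix.sub_apply, absM, C, Matrix.of_apply, huv i j, ← abs_mul]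
      exact abs_abs_sub_abs_le_abs_sub _ _
    calc ((absM W - C) i j) ^ 2 = |(absM W - C) i j| ^ 2 := (sq_abs _).symm
      _ ≤ |(W - B) i j| ^ 2 := by
          exact pow_le_pow_left₀ (abs_nonneg _) h1 2
      _ = ((W - B) i j) ^ 2 := sq_abs _
  exact le_trans (csInf_le hbdd ⟨C, hC, rfl⟩) hle
end

section
/- (Proposition 1, SVID versus SVD.) Let W ∈ ℝ^{m×n} be a real matrix, let sign(W) be its entrywise sign matrix (entries 1 where W_{ij} ≥ 0 and -1 where W_{ij} < 0), and let |W| be its entrywise absolute value matrix. Suppose a ∈ ℝ^m, b ∈ ℝⁿ are such that a bᵀ is a best rank-at-most-1 Frobenius approximation of W (i.e. ‖W - a bᵀ‖_F ≤ ‖W - B‖_F for all B of rank at most 1), and ã ∈ ℝ^m, b̃ ∈ ℝⁿ are such that ã b̃ᵀ is a best rank-at-most-1 Frobenius approximation of |W|. Then ‖W - sign(W) ⊙ (ã b̃ᵀ)‖_F² ≤ ‖W - a bᵀ‖_F². -/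
open Matrix

/-- The entrywise sign matrix of `W`: entries `1` where `W i j ≥ 0`, `-1` where `W i j < 0`. -/
noncomputable def signM {m n : ℕ} (W : Matrix (Fin m) (Fin n) ℝ) :
    Matrix (Fin m) (Fin n) ℝ :=
  Matrix.of fun i j => if W i j ≥ 0 then (1 : ℝ) else -1

lemma rank_vecMulVec_le_one {m n : ℕ} (u : Fin m → ℝ) (v : Fin n → ℝ) :
    (Matrix.vecMulVec u v).rank ≤ 1 := by
  rw [Matrix.vecMulVec_eq (Fin 1)]
  exact le_trans (Matrix.rank_mul_le_left _ _) ((Matrix.rank_le_card_width _).trans (by simp))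

lemma frobNorm_sq {m n : ℕ} (M : Matrix (Fin m) (Fin n) ℝ) :
    frobNorm M ^ 2 = ∑ i, ∑ j, (M i j) ^ 2 := by
  rw [frobNorm, Real.sq_sqrt]
  positivity


/-- Proposition 1 (SVID versus SVD): if `a bᵀ` is a best rank ≤ 1 Frobenius
approximation of `W` and `ã b̃ᵀ` is a best rank ≤ 1 Frobenius approximation of `|W|`,
then `‖W - sign(W) ⊙ (ã b̃ᵀ)‖_F² ≤ ‖W - a bᵀ‖_F²`. -/
theorem svid_error_le_svd_error {m n : ℕ} (W : Matrix (Fin m) (Fin n) ℝ)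
    (a : Fin m → ℝ) (b : Fin n → ℝ) (a' : Fin m → ℝ) (b' : Fin n → ℝ)
    (hab : ∀ B : Matrix (Fin m) (Fin n) ℝ, B.rank ≤ 1 →
      frobNorm (W - Matrix.vecMulVec a b) ≤ frobNorm (W - B))
    (hab' : ∀ B : Matrix (Fin m) (Fin n) ℝ, B.rank ≤ 1 →
      frobNorm (absM W - Matrix.vecMulVec a' b') ≤ frobNorm (absM W - B)) :
    frobNorm (W - Matrix.hadamard (signM W) (Matrix.vecMulVec a' b')) ^ 2 ≤
      frobNorm (W - Matrix.vecMulVec a b) ^ 2 := by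
  have h1 : frobNorm (W - Matrix.hadamard (signM W) (Matrix.vecMulVec a' b'))
      = frobNorm (absM W - Matrix.vecMulVec a' b') := by
    unfold frobNorm
    congr 1
    refine Finset.sum_congr rfl fun i _ => Finset.sum_congr rfl fun j _ => ?_
    simp only [Matrix.sub_apply, Matrix.hadamard_apply, signM, absM, Matrix.of_apply]
    by_cases h : W i j ≥ 0
    · rw [if_pos h, abs_of_nonneg h]; ring
    · rw [if_neg h, abs_of_neg (lt_of_not_ge h)]; ring
  have h2 := hab' (Matrix.vecMulVec (fun i => |a i|) (fun j => |b j|))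
    (rank_vecMulVec_le_one _ _)
  have h3 : frobNorm (absM W - Matrix.vecMulVec (fun i => |a i|) (fun j => |b j|)) ^ 2
      ≤ frobNorm (W - Matrix.vecMulVec a b) ^ 2 := by
    rw [frobNorm_sq, frobNorm_sq]
    refine Finset.sum_le_sum fun i _ => Finset.sum_le_sum fun j _ => ?_
    simp only [Matrix.sub_apply, Matrix.vecMulVec_apply, absM, Matrix.of_apply]
    rw [← abs_mul]
    have := abs_abs_sub_abs_le_abs_sub (W i j) (a i * b j)
    calc (|W i j| - |a i * b j|) ^ 2 ≤ |W i j - a i * b j| ^ 2 := by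
          rw [← sq_abs (|W i j| - |a i * b j|)]
          exact pow_le_pow_left₀ (abs_nonneg _) this 2
      _ = (W i j - a i * b j) ^ 2 := sq_abs _
  rw [h1]
  have h4 : frobNorm (absM W - Matrix.vecMulVec a' b') ^ 2
      ≤ frobNorm (absM W - Matrix.vecMulVec (fun i => |a i|) (fun j => |b j|)) ^ 2 := by
    have hn : 0 ≤ frobNorm (absM W - Matrix.vecMulVec a' b') := Real.sqrt_nonneg _
    exact pow_le_pow_left₀ hn h2 2
  linarith
end
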